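/- Let 𝓜 = (M,<,…) be an expansion of a linear order. Every dimension function dim : Def(𝓜) → ℕ ∪ {−∞} is completely determined by its restriction to the collection of bounded definable subsets of M; moreover, for any dimension function there exists a bounded definable subset X of M with dim X = 1. -/

import Mathlib

open FirstOrder FirstOrder.Language Set

universe u v w

namespace PaperDim

section Core

variable (L : FirstOrder.Language.{v, w}) (M : Type u) [L.Structure M]

/-- The collection of definable subsets of `M^n` (definable with parameters from `M`). -/
abbrev DefSet (n : ℕ) : Type u :=
  {X : Set (Fin n → M) // Set.Definable (Set.univ : Set M) L X}

variable {L M}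

/-- A definable subset of `M^1` viewed as a subset of `M`. -/
def asSet1 (X : Set (Fin 1 → M)) : Set M := {a : M | (fun _ => a) ∈ X}

/-- The fiber of `X ⊆ M^{n+1}` over `x ∈ M^n`, as a subset of `M^1`. -/
def fiber {n : ℕ} (X : Set (Fin (n + 1) → M)) (x : Fin n → M) : Set (Fin 1 → M) :=
  {y | Fin.snoc x (y 0) ∈ X}

/-- Condition (1) of a dimension function: `dim ∅ = -∞`, `dim {a} = 0`, `dim M = 1`.
Here `d k` is the value of the dimension function on definable subsets of `M^{k+1}`. -/
def Cond1 (d : ∀ n : ℕ, DefSet L M (n + 1) → WithBot ℕ) : Prop :=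
  (∀ X : DefSet L M 1, X.1 = ∅ → d 0 X = ⊥) ∧
  (∀ (X : DefSet L M 1) (a : M), X.1 = ({fun _ => a} : Set (Fin 1 → M)) → d 0 X = 0) ∧
  (∀ X : DefSet L M 1, X.1 = (Set.univ : Set (Fin 1 → M)) → d 0 X = 1)

/-- Condition (2)ₙ (at arity `n + 1`): `dim (X ∪ Y) = max (dim X) (dim Y)`. -/
def Cond2 (d : ∀ n : ℕ, DefSet L M (n + 1) → WithBot ℕ) (n : ℕ) : Prop :=
  ∀ X Y Z : DefSet L M (n + 1), Z.1 = X.1 ∪ Y.1 → d n Z = max (d n X) (d n Y)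

/-- Condition (3)ₙ (at arity `n + 1`): invariance under coordinate permutations. -/
def Cond3 (d : ∀ n : ℕ, DefSet L M (n + 1) → WithBot ℕ) (n : ℕ) : Prop :=
  ∀ (σ : Equiv.Perm (Fin (n + 1))) (X Y : DefSet L M (n + 1)),
    Y.1 = {y : Fin (n + 1) → M | y ∘ σ ∈ X.1} → d n Y = d n X

/-- Condition (3'): invariance under switching the two coordinates, at arity 2. -/
def Cond3' (d : ∀ n : ℕ, DefSet L M (n + 1) → WithBot ℕ) : Prop :=
  ∀ X Y : DefSet L M 2, Y.1 = {v : Fin 2 → M | ![v 1, v 0] ∈ X.1} → d 1 Y = d 1 X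

/-- Condition (4)ₙ, the addition property (at arity `n + 2`):
the set `X(i)` of points over which the fiber of `X` has dimension `i` is definable, and
`dim (X ∩ Π⁻¹(X(i))) = dim X(i) + i`. -/
def Cond4 (d : ∀ n : ℕ, DefSet L M (n + 1) → WithBot ℕ) (n : ℕ) : Prop :=
  ∀ (X : DefSet L M (n + 2)) (i : Fin 2),
    ∃ (Xi : DefSet L M (n + 1)) (W : DefSet L M (n + 2)),
      Xi.1 = {x : Fin (n + 1) → M |
        ∃ hf : Set.Definable (Set.univ : Set M) L (fiber X.1 x),
          d 0 ⟨fiber X.1 x, hf⟩ = ((i : ℕ) : WithBot ℕ)} ∧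
      W.1 = X.1 ∩ (fun z : Fin (n + 2) → M => z ∘ Fin.castSucc) ⁻¹' Xi.1 ∧
      d (n + 1) W = d n Xi + ((i : ℕ) : WithBot ℕ)

/-- A dimension function on the structure `M` (van den Dries). -/
def IsDimFun (d : ∀ n : ℕ, DefSet L M (n + 1) → WithBot ℕ) : Prop :=
  Cond1 d ∧ (∀ n, Cond2 d n) ∧ (∀ n, Cond3 d n) ∧ (∀ n, Cond4 d n)

/-- A weak dimension function: conditions (1), (2)₁, (3') and (4)ₙ for all `n > 1`. -/
def IsWeakDimFun (d : ∀ n : ℕ, DefSet L M (n + 1) → WithBot ℕ) : Prop :=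
  Cond1 d ∧ Cond2 d 0 ∧ Cond3' d ∧ (∀ n, Cond4 d n)

variable (L M)

/-- The set `DIM(M)` of dimension functions on `M`. -/
def DimFuns : Set (∀ n : ℕ, DefSet L M (n + 1) → WithBot ℕ) := {d | IsDimFun d}

/-- `𝔫_dim(M)`: the cardinality of the set of dimension functions on `M`. -/
noncomputable def nDim : Cardinal := Cardinal.mk (DimFuns L M)

/-- The order `<` is definable in the structure. -/
def LtDefinable [LT M] : Prop :=
  Set.Definable (Set.univ : Set M) L {v : Fin 2 → M | v 0 < v 1}

/-- The graph of addition is definable in the structure. -/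
def AddDefinable [Add M] : Prop :=
  Set.Definable (Set.univ : Set M) L {v : Fin 3 → M | v 0 + v 1 = v 2}

/-- The graph of multiplication is definable in the structure. -/
def MulDefinable [Mul M] : Prop :=
  Set.Definable (Set.univ : Set M) L {v : Fin 3 → M | v 0 * v 1 = v 2}

end Core

/-- The order topology on a linear order, generated by open rays. -/
def orderTop (α : Type*) [LinearOrder α] : TopologicalSpace α :=
  TopologicalSpace.generateFrom {s : Set α | (∃ a, s = Set.Ioi a) ∨ (∃ a, s = Set.Iio a)}

/-- A set is discrete (w.r.t. a topology `t`) if all of its points are isolated in it. -/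
def DiscreteIn {α : Type*} (t : TopologicalSpace α) (D : Set α) : Prop :=
  ∀ x ∈ D, ∃ U : Set α, t.IsOpen U ∧ U ∩ D = {x}

/-- An open interval: a nonempty set of the form `(a, b)` with `a, b ∈ M ∪ {±∞}`. -/
def IsOpenInterval {α : Type*} [Preorder α] (S : Set α) : Prop :=
  S.Nonempty ∧ ((∃ a b, S = Set.Ioo a b) ∨ (∃ a, S = Set.Ioi a) ∨
    (∃ b, S = Set.Iio b) ∨ S = Set.univ)

section Ord

variable (L : FirstOrder.Language.{v, w}) (M : Type u) [L.Structure M]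

/-- O-minimality: every definable subset of `M` is a union of a finite set and finitely many
open intervals. -/
def OMinimal [LinearOrder M] : Prop :=
  ∀ X : DefSet L M 1, ∃ (F : Set M) (k : ℕ) (C : Fin k → Set M),
    F.Finite ∧ (∀ i, IsOpenInterval (C i)) ∧ asSet1 X.1 = F ∪ ⋃ i, C i

/-- Weak o-minimality: every definable subset of `M` is a union of finitely many convex sets. -/
def WeaklyOMinimal [LinearOrder M] : Prop :=
  ∀ X : DefSet L M 1, ∃ (k : ℕ) (C : Fin k → Set M),
    (∀ i, (C i).OrdConnected) ∧ asSet1 X.1 = ⋃ i, C i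

/-- Definable completeness: every definable subset of `M` has a supremum and an infimum in
`M ∪ {±∞}`. -/
def DefinablyComplete [LinearOrder M] : Prop :=
  ∀ X : DefSet L M 1,
    ((asSet1 X.1).Nonempty → BddAbove (asSet1 X.1) → ∃ a, IsLUB (asSet1 X.1) a) ∧
    ((asSet1 X.1).Nonempty → BddBelow (asSet1 X.1) → ∃ a, IsGLB (asSet1 X.1) a)

/-- d-minimality: the structure is definably complete and in every elementarily equivalent
structure, every definable subset of the universe is a union of an open set and finitely many
discrete sets. The linear order is assumed to be the interpretation of the relation symbol `lt`. -/
def DMinimal [LinearOrder M] (lt : L.Relations 2) : Prop :=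
  DefinablyComplete L M ∧
  ∀ (N : Type u) [L.Structure N] [LinearOrder N],
    (∀ a b : N, Structure.RelMap lt ![a, b] ↔ a < b) →
    L.ElementarilyEquivalent M N →
    ∀ X : DefSet L N 1,
      ∃ (U : Set N) (k : ℕ) (D : Fin k → Set N),
        (orderTop N).IsOpen U ∧ (∀ i, DiscreteIn (orderTop N) (D i)) ∧
        asSet1 X.1 = U ∪ ⋃ i, D i

end Ord

open scoped Classical in
/-- The topological dimension of a definable set: the largest `d` such that the image of the
set under some coordinate projection `M^n → M^d` has nonempty interior (w.r.t. the order
topology and the corresponding product topologies). -/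
noncomputable def dimTop {M : Type u} [LinearOrder M] {n : ℕ} (X : Set (Fin n → M)) :
    WithBot ℕ :=
  if X = ∅ then ⊥
  else
    ↑(sSup {d : ℕ | ∃ f : Fin d → Fin n, Function.Injective f ∧
      (@interior (Fin d → M) (@Pi.topologicalSpace (Fin d) (fun _ => M) (fun _ => orderTop M))
        ((fun x : Fin n → M => x ∘ f) '' X)).Nonempty})


/-! ### Extra notions -/

/-- `G ⊆ M²` is the graph of a bijection from `A` onto `B`. -/
def IsDefBijectionGraph {M : Type u} (G : Set (Fin 2 → M)) (A B : Set M) : Prop :=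
  (∀ v ∈ G, v 0 ∈ A ∧ v 1 ∈ B) ∧
  (∀ x ∈ A, ∃! y : M, (![x, y] : Fin 2 → M) ∈ G) ∧
  (∀ y ∈ B, ∃! x : M, (![x, y] : Fin 2 → M) ∈ G)

section Extra

variable (L : FirstOrder.Language.{v, w}) (M : Type u) [L.Structure M]

/-- A definable set `I ⊆ M` is self-sufficient if it is infinite and there is no definable
bijection between an infinite definable subset of `I` and an infinite definable subset of
`M ∖ I`. -/
def SelfSufficient (I : Set M) : Prop :=
  I.Infinite ∧
  ∀ J₁ J₂ : DefSet L M 1, asSet1 J₁.1 ⊆ I → asSet1 J₂.1 ⊆ Iᶜ →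
    (asSet1 J₁.1).Infinite → (asSet1 J₂.1).Infinite →
    ¬ ∃ G : DefSet L M 2, IsDefBijectionGraph G.1 (asSet1 J₁.1) (asSet1 J₂.1)

/-- A self-sufficient set is minimally self-sufficient if every self-sufficient set either
meets it in a finite set or contains it up to a finite set. -/
def MinimallySelfSufficient (I : Set M) : Prop :=
  SelfSufficient L M I ∧
  ∀ X : DefSet L M 1, SelfSufficient L M (asSet1 X.1) →
    (I ∩ asSet1 X.1).Finite ∨ ∃ F : Set M, F.Finite ∧ I ⊆ asSet1 X.1 ∪ F

end Extra

/-- `I₁ ∼_fin I₂`: the symmetric difference is finite. -/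
def FinSymmDiff {M : Type u} (A B : Set M) : Prop := ((A \ B) ∪ (B \ A)).Finite

/-- `I⟨τ⟩`: the product of copies of `I` (where `τ i = false`) and `M ∖ I`
(where `τ i = true`). -/
def Itau {M : Type u} (I : Set M) {n : ℕ} (τ : Fin n → Bool) : Set (Fin n → M) :=
  {v | ∀ i, if τ i then v i ∉ I else v i ∈ I}

open scoped Classical in
/-- The value of `Dim[I]` on a (nonempty) definable set contained in `I⟨τ⟩`. -/
noncomputable def DimIPiece {M : Type u} [LinearOrder M] (I : Set M) :
    (n : ℕ) → (Fin (n + 1) → Bool) → Set (Fin (n + 1) → M) → WithBot ℕ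
  | 0, τ, X =>
    if X = ∅ then ⊥ else if τ 0 then 0 else dimTop X
  | n + 1, τ, X =>
    if X = ∅ then ⊥
    else if τ (Fin.last (n + 1)) then
      DimIPiece I n (fun i => τ i.castSucc)
        ((fun v : Fin (n + 2) → M => v ∘ Fin.castSucc) '' X)
    else
      max (dimTop {x : Fin (n + 1) → M |
              (∃ v ∈ X, v ∘ Fin.castSucc = x) ∧ dimTop (fiber X x) ≠ 1})
        (dimTop {x : Fin (n + 1) → M | dimTop (fiber X x) = 1} + 1)

/-- The function `Dim[I]` associated with a subset `I` of `M` (the input dimension being the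
topological dimension). -/
noncomputable def DimI {M : Type u} [LinearOrder M] (I : Set M) (n : ℕ)
    (X : Set (Fin (n + 1) → M)) : WithBot ℕ :=
  Finset.univ.sup fun τ : Fin (n + 1) → Bool => DimIPiece I n τ (X ∩ Itau I τ)

section Morley

variable (L : FirstOrder.Language.{v, w}) (M : Type u) [L.Structure M]

/-- The model-theoretic algebraic closure of a set of parameters `A`. -/
def aclS (A : Set M) : Set M :=
  {a : M | ∃ s : Set (Fin 1 → M), Set.Definable A L s ∧ s.Finite ∧ (fun _ => a) ∈ s}

open scoped Classical in
/-- The rank `rk^acl(X/A)`: the largest cardinality of a subset of the coordinates of a point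
of `X` that is `acl`-independent over `A` (and `-∞` for `X = ∅`). -/
noncomputable def rkOver {n : ℕ} (A : Set M) (X : Set (Fin n → M)) : WithBot ℕ :=
  if X = ∅ then ⊥
  else
    ↑(sSup {k : ℕ | ∃ x ∈ X, ∃ S : Finset (Fin n), S.card = k ∧
        ∀ i ∈ S, x i ∉ aclS L M (A ∪ x '' {j : Fin n | j ∈ S ∧ j ≠ i})})

/-- A structure is minimal if every definable subset of the universe is finite or cofinite. -/
def MinimalStr : Prop :=
  ∀ X : DefSet L M 1, (asSet1 X.1).Finite ∨ ((asSet1 X.1)ᶜ : Set M).Finite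

/-- A structure is strongly minimal if every elementarily equivalent structure is minimal. -/
def StronglyMinimal : Prop :=
  MinimalStr L M ∧
  ∀ (N : Type u) [L.Structure N], L.ElementarilyEquivalent M N → MinimalStr L N

end Morley

section Theories

/-- A divisible Abelian group structure on a subset `S`, with addition `f`. -/
def DivAbGroupOn {α : Type*} (f : α → α → α) (S : Set α) : Prop :=
  (∀ x ∈ S, ∀ y ∈ S, f x y ∈ S) ∧
  (∀ x ∈ S, ∀ y ∈ S, f x y = f y x) ∧
  (∀ x ∈ S, ∀ y ∈ S, ∀ z ∈ S, f (f x y) z = f x (f y z)) ∧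
  (∃ e ∈ S, (∀ x ∈ S, f e x = x) ∧ (∀ x ∈ S, ∃ y ∈ S, f x y = e)) ∧
  (∀ k : ℕ, 0 < k → ∀ x ∈ S, ∃ y ∈ S, (f y)^[k - 1] y = x)

/-- Embedding of `M` into `M ∪ {±∞}`. -/
def emb {α : Type*} (x : α) : WithBot (WithTop α) := ((x : WithTop α) : WithBot (WithTop α))

/-- `M` is a model of the theory `T_m` of Proposition 3.17: a DLO with constants
`c_1 < ⋯ < c_{m-1}` (recorded here by the boundary sequence
`⊥ = c 0 < c 1 < ⋯ < c m = ⊤` in `M ∪ {±∞}`), such that `+` restricts to a divisible Abelian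
group on each interval `(c_{i-1}, c_i)` and is constantly `c_1` off the union of the
`(c_{i-1}, c_i)²`. -/
def ModelTm (m : ℕ) (hm : 0 < m) (L : FirstOrder.Language.{v, w}) (M : Type u)
    [L.Structure M] [LinearOrder M]
    (lt : L.Relations 2) (plus : L.Functions 2)
    (c : Fin (m + 1) → WithBot (WithTop M)) : Prop :=
  DenselyOrdered M ∧ NoMinOrder M ∧ NoMaxOrder M ∧ Nonempty M ∧
  (∀ x y : M, Structure.RelMap lt ![x, y] ↔ x < y) ∧
  c 0 = ⊥ ∧ c (Fin.last m) = ⊤ ∧ StrictMono c ∧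
  (∀ i : Fin (m + 1), i ≠ 0 → i ≠ Fin.last m → ∃ x : M, c i = emb x) ∧
  (∀ i : Fin m,
    DivAbGroupOn (fun x y : M => Structure.funMap plus ![x, y])
      {x : M | c i.castSucc < emb x ∧ emb x < c i.succ}) ∧
  (∀ x y : M,
    (¬ ∃ i : Fin m, (c i.castSucc < emb x ∧ emb x < c i.succ) ∧
        (c i.castSucc < emb y ∧ emb y < c i.succ)) →
    ∀ z : M, c ⟨1, by omega⟩ = emb z → Structure.funMap plus ![x, y] = z)

/-- The set of realizations of a unary predicate. -/
def relSet (L : FirstOrder.Language.{v, w}) (M : Type u) [L.Structure M]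
    (r : L.Relations 1) : Set M :=
  {x : M | Structure.RelMap r ![x]}

/-- `M` is a model of the theory `T_m` of Theorem 3.18: an ordered divisible Abelian group
with a strictly increasing chain of nontrivial proper convex subgroups `U_1 ⊊ ⋯ ⊊ U_m ⊊ M`. -/
def ModelTw (m : ℕ) (L : FirstOrder.Language.{v, w}) (M : Type u)
    [L.Structure M] [AddCommGroup M] [LinearOrder M] [IsOrderedAddMonoid M]
    (lt : L.Relations 2) (plus : L.Functions 2) (U : Fin m → L.Relations 1) : Prop :=
  (∀ x y : M, Structure.RelMap lt ![x, y] ↔ x < y) ∧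
  (∀ x y : M, Structure.funMap plus ![x, y] = x + y) ∧
  (∀ k : ℕ, 0 < k → ∀ x : M, ∃ y : M, k • y = x) ∧
  (∀ i : Fin m,
    (0 : M) ∈ relSet L M (U i) ∧
    (∀ x ∈ relSet L M (U i), ∀ y ∈ relSet L M (U i), x + y ∈ relSet L M (U i)) ∧
    (∀ x ∈ relSet L M (U i), -x ∈ relSet L M (U i)) ∧
    (relSet L M (U i)).OrdConnected ∧
    relSet L M (U i) ≠ {0} ∧ relSet L M (U i) ≠ Set.univ) ∧
  (∀ i j : Fin m, i < j → relSet L M (U i) ⊂ relSet L M (U j))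

end Theories


/-! ### Auxiliary material for Statement 11 -/

section S11Aux

variable {L : FirstOrder.Language.{v, w}} {M : Type u} [L.Structure M]

/- WithBot ℕ helpers -/

private lemma wb_zero_ne_bot : (0 : WithBot ℕ) ≠ ⊥ := by
  exact_mod_cast WithBot.coe_ne_bot (a := (0 : ℕ))

private lemma wb_one_ne_bot : (1 : WithBot ℕ) ≠ ⊥ := by
  exact_mod_cast WithBot.coe_ne_bot (a := (1 : ℕ))

private lemma wb_not_one_le_zero : ¬ (1 : WithBot ℕ) ≤ 0 := by decide

private lemma wb_one_ne_zero : (1 : WithBot ℕ) ≠ 0 := by decide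

private lemma wb_le_zero {a : WithBot ℕ} (h1 : a ≤ 1) (hne : a ≠ 1) : a ≤ 0 := by
  induction a using WithBot.recBotCoe with
  | bot => exact bot_le
  | coe n =>
    rw [← WithBot.coe_one, WithBot.coe_le_coe] at h1
    rw [← WithBot.coe_one, Ne, WithBot.coe_eq_coe] at hne
    rw [← WithBot.coe_zero, WithBot.coe_le_coe]
    omega

private lemma wb_zero_or_one {a : WithBot ℕ} (h0 : 0 ≤ a) (h1 : a ≤ 1) :
    a = 0 ∨ a = 1 := by
  induction a using WithBot.recBotCoe with
  | bot => exact absurd h0 (by simp)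
  | coe n =>
    rw [← WithBot.coe_one, WithBot.coe_le_coe] at h1
    rw [← WithBot.coe_zero, WithBot.coe_eq_coe, ← WithBot.coe_one, WithBot.coe_eq_coe]
    omega

private lemma wb_add_one_le_one {a : WithBot ℕ} (h : a + 1 ≤ 1) : a ≤ 0 := by
  induction a using WithBot.recBotCoe with
  | bot => exact bot_le
  | coe n =>
    rw [← WithBot.coe_one, ← WithBot.coe_add, WithBot.coe_le_coe] at h
    rw [← WithBot.coe_zero, WithBot.coe_le_coe]
    omega

private lemma fin2_cast_zero : (((0 : Fin 2) : ℕ) : WithBot ℕ) = 0 := by norm_num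

private lemma fin2_cast_one : (((1 : Fin 2) : ℕ) : WithBot ℕ) = 1 := by norm_num

/- Basic facts about `Fin 1`-tuples and `Fin.snoc` -/

private lemma eq_const1 (v : Fin 1 → M) : v = fun _ => v 0 := by
  funext i
  rw [Subsingleton.elim i 0]

private lemma snoc_one (x : Fin 1 → M) (a : M) : (Fin.snoc x a : Fin 2 → M) 1 = a := by
  simp [Fin.snoc]

private lemma snoc_zero (x : Fin 1 → M) (a : M) : (Fin.snoc x a : Fin 2 → M) 0 = x 0 := by
  simp only [Fin.snoc, Nat.lt_irrefl]
  norm_num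

/- Definability helpers -/

private lemma definable_subst {m k : ℕ} {S : Set (Fin m → M)}
    (hS : Set.Definable (Set.univ : Set M) L S) (g : Fin m → Fin k ⊕ M) :
    Set.Definable (Set.univ : Set M)
      L {v : Fin k → M | (fun i => Sum.elim v id (g i)) ∈ S} := by
  obtain ⟨φ, rfl⟩ := hS
  refine ⟨φ.subst fun i =>
    Sum.elim (fun j => Term.var j)
      (fun a => Constants.term (Language.con L ⟨a, Set.mem_univ a⟩)) (g i), ?_⟩
  ext v
  simp only [Set.mem_setOf_eq, Formula.Realize, BoundedFormula.realize_subst]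
  refine iff_of_eq (congrArg (fun w => BoundedFormula.Realize φ w default) ?_)
  funext i
  cases hgi : g i <;> simp [hgi]

private lemma definable_relswap {r : M → M → Prop}
    (hE : Set.Definable (Set.univ : Set M) L {v : Fin 2 → M | r (v 0) (v 1)}) :
    Set.Definable (Set.univ : Set M) L {v : Fin 2 → M | r (v 1) (v 0)} := by
  have h := hE.preimage_comp (![1, 0] : Fin 2 → Fin 2)
  convert h using 1
  rfl

private lemma definable_relConstR {r : M → M → Prop}
    (hE : Set.Definable (Set.univ : Set M) L {v : Fin 2 → M | r (v 0) (v 1)}) (b : M) :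
    Set.Definable (Set.univ : Set M) L {v : Fin 1 → M | r (v 0) b} := by
  have h := definable_subst hE (![Sum.inl 0, Sum.inr b] : Fin 2 → Fin 1 ⊕ M)
  convert h using 1
  rfl

private lemma definable_relConstL {r : M → M → Prop}
    (hE : Set.Definable (Set.univ : Set M) L {v : Fin 2 → M | r (v 0) (v 1)}) (a : M) :
    Set.Definable (Set.univ : Set M) L {v : Fin 1 → M | r a (v 0)} := by
  have h := definable_subst hE (![Sum.inr a, Sum.inl 0] : Fin 2 → Fin 1 ⊕ M)
  convert h using 1
  rfl

private lemma definable_fiber {n : ℕ} {S : Set (Fin (n + 2) → M)}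
    (hS : Set.Definable (Set.univ : Set M) L S) (x : Fin (n + 1) → M) :
    Set.Definable (Set.univ : Set M) L (fiber S x) := by
  have h := definable_subst hS
    (fun j => Fin.lastCases (Sum.inl 0) (fun i => Sum.inr (x i)) j :
      Fin (n + 2) → Fin 1 ⊕ M)
  convert h using 1
  ext y
  show Fin.snoc x (y 0) ∈ S ↔ _
  refine iff_of_eq (congrArg (· ∈ S) ?_)
  funext j
  induction j using Fin.lastCases with
  | last => simp
  | cast i => simp

private lemma definable_memsnd (X : DefSet L M 1) :
    Set.Definable (Set.univ : Set M) L {v : Fin 2 → M | (fun _ => v 1) ∈ X.1} :=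
  X.2.preimage_comp (fun _ : Fin 1 => (1 : Fin 2))

private lemma definable_memfst (X : DefSet L M 1) :
    Set.Definable (Set.univ : Set M) L {v : Fin 2 → M | (fun _ => v 0) ∈ X.1} :=
  X.2.preimage_comp (fun _ : Fin 1 => (0 : Fin 2))

/- Basic consequences of the axioms of a dimension function -/

private lemma dim_ext {d : ∀ n : ℕ, DefSet L M (n + 1) → WithBot ℕ} {n : ℕ}
    (h2 : Cond2 d n) {X Y : DefSet L M (n + 1)} (h : X.1 = Y.1) : d n X = d n Y := by
  have e1 := h2 Y X X (by rw [h, Set.union_self])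
  have e2 := h2 Y X Y (by rw [h, Set.union_self])
  rw [e1, ← e2]

private lemma dim_mono {d : ∀ n : ℕ, DefSet L M (n + 1) → WithBot ℕ} {n : ℕ}
    (h2 : Cond2 d n) {X Y : DefSet L M (n + 1)} (h : X.1 ⊆ Y.1) : d n X ≤ d n Y := by
  have e := h2 X Y Y (Set.union_eq_self_of_subset_left h).symm
  rw [e]
  exact le_max_left _ _

private lemma dim_nonneg {d : ∀ n : ℕ, DefSet L M (n + 1) → WithBot ℕ}
    (h1 : Cond1 d) (h2 : Cond2 d 0) {X : DefSet L M 1} (hne : X.1.Nonempty) :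
    0 ≤ d 0 X := by
  obtain ⟨v, hv⟩ := hne
  have hsing : Set.Definable (Set.univ : Set M) L ({v} : Set (Fin 1 → M)) := by
    refine ⟨Term.equal (Term.var 0)
      (Constants.term (Language.con L ⟨v 0, Set.mem_univ _⟩)), ?_⟩
    ext w
    simp only [Set.mem_singleton_iff, Set.mem_setOf_eq, Formula.realize_equal,
      Term.realize_var, Term.realize_con]
    constructor
    · rintro rfl; rfl
    · intro h
      rw [eq_const1 w, eq_const1 v, h]
  set S : DefSet L M 1 := ⟨{v}, hsing⟩ with hS
  have hs0 : d 0 S = 0 := by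
    refine h1.2.1 S (v 0) ?_
    show ({v} : Set (Fin 1 → M)) = {fun _ => v 0}
    rw [← eq_const1 v]
  have e := h2 X S X (by rw [Set.union_eq_self_of_subset_right]; exact
    Set.singleton_subset_iff.2 hv)
  rw [e, hs0]
  exact le_max_right _ _

private lemma dim_le_one {d : ∀ n : ℕ, DefSet L M (n + 1) → WithBot ℕ}
    (h1 : Cond1 d) (h2 : Cond2 d 0) (X : DefSet L M 1) : d 0 X ≤ 1 := by
  set C : DefSet L M 1 := ⟨X.1ᶜ, X.2.compl⟩ with hC
  set U : DefSet L M 1 := ⟨Set.univ, Set.definable_univ⟩ with hU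
  have e := h2 X C U (Set.union_compl_self X.1).symm
  have hu : d 0 U = 1 := h1.2.2 U rfl
  rw [hu] at e
  exact le_trans (le_max_left _ _) e.ge

end S11Aux


section S11Core

variable {L : FirstOrder.Language.{v, w}} {M : Type u} [L.Structure M]

private lemma sublemma {d : ∀ n : ℕ, DefSet L M (n + 1) → WithBot ℕ} (hd : IsDimFun d)
    {le' : M → M → Prop} (htot : ∀ a b, le' a b ∨ le' b a)
    (hE : Set.Definable (Set.univ : Set M) L {v : Fin 2 → M | le' (v 0) (v 1)})
    (X : DefSet L M 1) (hX : d 0 X = 1)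
    (hbd : ∀ (b : M) (Y : DefSet L M 1),
      Y.1 = X.1 ∩ {v : Fin 1 → M | le' (v 0) b} → d 0 Y ≠ 1) :
    False := by
  obtain ⟨h1, h2, h3, h4⟩ := hd
  have hrefl : ∀ a, le' a a := fun a => (htot a a).elim id id
  have hIic : ∀ b : M, Set.Definable (Set.univ : Set M) L
      (X.1 ∩ {v : Fin 1 → M | le' (v 0) b}) :=
    fun b => X.2.inter (definable_relConstR hE b)
  have htrle : ∀ (b : M) (Y : DefSet L M 1),
      Y.1 = X.1 ∩ {v : Fin 1 → M | le' (v 0) b} → d 0 Y ≤ 0 :=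
    fun b Y hY => wb_le_zero (dim_le_one h1 (h2 0) Y) (hbd b Y hY)
  -- the two "triangle" sets
  obtain ⟨T, hT⟩ : ∃ T : DefSet L M 2,
      T.1 = {v : Fin 2 → M | (fun _ : Fin 1 => v 1) ∈ X.1 ∧ le' (v 1) (v 0)} :=
    ⟨⟨_, (definable_memsnd X).inter (definable_relswap hE)⟩, rfl⟩
  obtain ⟨Ts, hTs⟩ : ∃ Ts : DefSet L M 2,
      Ts.1 = {v : Fin 2 → M | (fun _ : Fin 1 => v 0) ∈ X.1 ∧ le' (v 0) (v 1)} :=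
    ⟨⟨_, (definable_memfst X).inter hE⟩, rfl⟩
  have hdTs : d 1 Ts = d 1 T := by
    refine h3 1 (Equiv.swap 0 1) T Ts ?_
    ext y
    rw [hTs]
    show _ ↔ y ∘ (Equiv.swap 0 1) ∈ T.1
    rw [hT]
    simp only [Set.mem_setOf_eq, Function.comp_apply, Equiv.swap_apply_left,
      Equiv.swap_apply_right]
  -- fibers
  have fibT : ∀ x : Fin 1 → M,
      fiber T.1 x = X.1 ∩ {v : Fin 1 → M | le' (v 0) (x 0)} := by
    intro x
    ext y
    show Fin.snoc x (y 0) ∈ T.1 ↔ _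
    rw [hT]
    simp only [Set.mem_setOf_eq, snoc_one, snoc_zero]
    rw [← eq_const1 y]
    exact Iff.rfl
  have fibTs : ∀ x : Fin 1 → M,
      fiber Ts.1 x = {y : Fin 1 → M | (fun _ : Fin 1 => x 0) ∈ X.1 ∧ le' (x 0) (y 0)} := by
    intro x
    ext y
    show Fin.snoc x (y 0) ∈ Ts.1 ↔ _
    rw [hTs]
    simp only [Set.mem_setOf_eq, snoc_one, snoc_zero]
  -- dimension of T via its (bounded) fibers
  obtain ⟨T0, W0, hT0, hW0, hdW0⟩ := h4 0 T 0
  have hW0T : W0.1 = T.1 := by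
    rw [hW0]
    refine Set.inter_eq_left.2 ?_
    intro v hv
    have hfdef := definable_fiber T.2 (v ∘ Fin.castSucc)
    show v ∘ Fin.castSucc ∈ T0.1
    rw [hT0]
    refine ⟨hfdef, ?_⟩
    have hne : (fiber T.1 (v ∘ Fin.castSucc)).Nonempty := by
      refine ⟨fun _ => v (Fin.last 1), ?_⟩
      show Fin.snoc (v ∘ Fin.castSucc) (v (Fin.last 1)) ∈ T.1
      have hvv : Fin.snoc (v ∘ Fin.castSucc) (v (Fin.last 1)) = v := Fin.snoc_init_self v
      rw [hvv]
      exact hv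
    have h0le := dim_nonneg h1 (h2 0) (X := ⟨_, hfdef⟩) hne
    have hle0 := htrle ((v ∘ Fin.castSucc) 0) ⟨_, hfdef⟩ (fibT (v ∘ Fin.castSucc))
    rw [fin2_cast_zero]
    exact le_antisymm hle0 h0le
  have hdT : d 1 T = d 0 T0 := by
    have e : d 1 W0 = d 1 T := dim_ext (h2 1) hW0T
    rw [← e, hdW0, fin2_cast_zero, add_zero]
  have hdTle : d 1 T ≤ 1 := by
    rw [hdT]
    exact dim_le_one h1 (h2 0) T0
  -- dimension of Ts via its fibers (which are "rays")
  obtain ⟨A0, V0, hA0, hV0, hdV0⟩ := h4 0 Ts 0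
  obtain ⟨A1, V1, hA1, hV1, hdV1⟩ := h4 0 Ts 1
  have hdA1 : d 0 A1 ≤ 0 := by
    have hsub : V1.1 ⊆ Ts.1 := by rw [hV1]; exact Set.inter_subset_left
    have hle : d 1 V1 ≤ 1 := le_trans (dim_mono (h2 1) hsub) (by rw [hdTs]; exact hdTle)
    rw [hdV1, fin2_cast_one] at hle
    exact wb_add_one_le_one hle
  -- X = A0 ∪ A1
  have hXsplit : X.1 = A0.1 ∪ A1.1 := by
    ext y
    constructor
    · intro hy
      have hyy : (fun _ : Fin 1 => y 0) ∈ X.1 := by rw [← eq_const1 y]; exact hy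
      have hfdef := definable_fiber Ts.2 y
      have hne : (fiber Ts.1 y).Nonempty := by
        refine ⟨y, ?_⟩
        rw [fibTs y]
        exact ⟨hyy, hrefl (y 0)⟩
      have h0le := dim_nonneg h1 (h2 0) (X := ⟨_, hfdef⟩) hne
      have hle1 := dim_le_one h1 (h2 0) (⟨_, hfdef⟩ : DefSet L M 1)
      rcases wb_zero_or_one h0le hle1 with h | h
      · left; rw [hA0]; exact ⟨hfdef, by rw [fin2_cast_zero]; exact h⟩
      · right; rw [hA1]; exact ⟨hfdef, by rw [fin2_cast_one]; exact h⟩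
    · rintro (hy | hy)
      · rw [hA0] at hy
        obtain ⟨hf, hd0⟩ := hy
        have hne : (fiber Ts.1 y).Nonempty := by
          rcases Set.eq_empty_or_nonempty (fiber Ts.1 y) with he | hne
          · exfalso
            have hbot := h1.1 ⟨_, hf⟩ he
            rw [hbot, fin2_cast_zero] at hd0
            exact wb_zero_ne_bot hd0.symm
          · exact hne
        obtain ⟨z, hz⟩ := hne
        rw [fibTs y] at hz
        rw [eq_const1 y]
        exact hz.1
      · rw [hA1] at hy
        obtain ⟨hf, hd0⟩ := hy
        have hne : (fiber Ts.1 y).Nonempty := by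
          rcases Set.eq_empty_or_nonempty (fiber Ts.1 y) with he | hne
          · exfalso
            have hbot := h1.1 ⟨_, hf⟩ he
            rw [hbot, fin2_cast_one] at hd0
            exact wb_one_ne_bot hd0.symm
          · exact hne
        obtain ⟨z, hz⟩ := hne
        rw [fibTs y] at hz
        rw [eq_const1 y]
        exact hz.1
  have hmax : d 0 X = max (d 0 A0) (d 0 A1) := h2 0 A0 A1 X hXsplit
  rw [hX] at hmax
  have hdA0 : d 0 A0 = 1 := by
    rcases max_choice (d 0 A0) (d 0 A1) with h | h
    · rw [h] at hmax; exact hmax.symm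
    · exfalso
      rw [h] at hmax
      rw [← hmax] at hdA1
      exact wb_not_one_le_zero hdA1
  have hA0X : A0.1 ⊆ X.1 := by rw [hXsplit]; exact Set.subset_union_left
  have hA0ne : A0.1.Nonempty := by
    rcases Set.eq_empty_or_nonempty A0.1 with he | h
    · exfalso
      have hbot := h1.1 A0 he
      rw [hbot] at hdA0
      exact wb_one_ne_bot hdA0.symm
    · exact h
  obtain ⟨x0, hx0⟩ := hA0ne
  have hx0' := hx0
  rw [hA0] at hx0'
  obtain ⟨hf0, hdf0⟩ := hx0'
  -- split A0 at x0
  have hsplit2 : A0.1 = (A0.1 ∩ {v : Fin 1 → M | le' (v 0) (x0 0)}) ∪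
      (A0.1 ∩ {v : Fin 1 → M | le' (x0 0) (v 0)}) := by
    ext v
    constructor
    · intro hv
      rcases htot (v 0) (x0 0) with h | h
      · exact Or.inl ⟨hv, h⟩
      · exact Or.inr ⟨hv, h⟩
    · rintro (hv | hv) <;> exact hv.1
  have hleft : d 0 (⟨A0.1 ∩ {v : Fin 1 → M | le' (v 0) (x0 0)},
      A0.2.inter (definable_relConstR hE (x0 0))⟩ : DefSet L M 1) ≤ 0 := by
    refine le_trans (dim_mono (h2 0)
      (Y := ⟨X.1 ∩ {v : Fin 1 → M | le' (v 0) (x0 0)}, hIic (x0 0)⟩) ?_)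
      (htrle (x0 0) ⟨X.1 ∩ {v : Fin 1 → M | le' (v 0) (x0 0)}, hIic (x0 0)⟩ rfl)
    exact Set.inter_subset_inter_left _ hA0X
  have hright : d 0 (⟨A0.1 ∩ {v : Fin 1 → M | le' (x0 0) (v 0)},
      A0.2.inter (definable_relConstL hE (x0 0))⟩ : DefSet L M 1) ≤ 0 := by
    have hsub : A0.1 ∩ {v : Fin 1 → M | le' (x0 0) (v 0)} ⊆ fiber Ts.1 x0 := by
      intro v hv
      rw [fibTs x0]
      refine ⟨?_, hv.2⟩
      rw [← eq_const1 x0]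
      exact hA0X hx0
    refine le_trans (dim_mono (h2 0) (Y := ⟨_, hf0⟩) hsub) (le_of_eq ?_)
    rw [hdf0, fin2_cast_zero]
  have hfin := h2 0
    ⟨A0.1 ∩ {v : Fin 1 → M | le' (v 0) (x0 0)}, A0.2.inter (definable_relConstR hE (x0 0))⟩
    ⟨A0.1 ∩ {v : Fin 1 → M | le' (x0 0) (v 0)}, A0.2.inter (definable_relConstL hE (x0 0))⟩
    A0 hsplit2
  rw [hdA0] at hfin
  have h10 : (1 : WithBot ℕ) ≤ 0 := by
    rw [hfin]
    exact max_le hleft hright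
  exact wb_not_one_le_zero h10

private lemma claim [LinearOrder M] {d : ∀ n : ℕ, DefSet L M (n + 1) → WithBot ℕ}
    (hd : IsDimFun d) (hlt : LtDefinable L M)
    {X : DefSet L M 1} (hX : d 0 X = 1) :
    ∃ (a b : M) (Y : DefSet L M 1),
      Y.1 = X.1 ∩ ({v : Fin 1 → M | a ≤ v 0} ∩ {v : Fin 1 → M | v 0 ≤ b}) ∧ d 0 Y = 1 := by
  by_contra hcon
  push_neg at hcon
  obtain ⟨h1, h2, h3, h4⟩ := id hd
  have hXne : X.1.Nonempty := by
    rcases Set.eq_empty_or_nonempty X.1 with he | h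
    · exfalso
      have hbot := h1.1 X he
      rw [hbot] at hX
      exact wb_one_ne_bot hX.symm
    · exact h
  obtain ⟨v0, hv0⟩ := hXne
  have hlt' : Set.Definable (Set.univ : Set M) L {v : Fin 2 → M | v 0 < v 1} := hlt
  have hle : Set.Definable (Set.univ : Set M) L {v : Fin 2 → M | v 0 ≤ v 1} := by
    have h := (definable_relswap (r := fun x y : M => x < y) hlt').compl
    convert h using 1
    ext v
    simp [not_lt]
  have hge : Set.Definable (Set.univ : Set M) L {v : Fin 2 → M | v 1 ≤ v 0} := by
    have h := hlt'.compl
    convert h using 1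
    ext v
    simp [not_lt]
  obtain ⟨XL, hXL⟩ : ∃ Y : DefSet L M 1, Y.1 = X.1 ∩ {v : Fin 1 → M | v 0 ≤ v0 0} :=
    ⟨⟨_, X.2.inter (definable_relConstR hle (v0 0))⟩, rfl⟩
  obtain ⟨XR, hXR⟩ : ∃ Y : DefSet L M 1, Y.1 = X.1 ∩ {v : Fin 1 → M | v0 0 ≤ v 0} :=
    ⟨⟨_, X.2.inter (definable_relConstL hle (v0 0))⟩, rfl⟩
  have hsplit : X.1 = XL.1 ∪ XR.1 := by
    rw [hXL, hXR]
    ext v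
    constructor
    · intro hv
      rcases le_total (v 0) (v0 0) with h | h
      · exact Or.inl ⟨hv, h⟩
      · exact Or.inr ⟨hv, h⟩
    · rintro (hv | hv) <;> exact hv.1
  have hmax := h2 0 XL XR X hsplit
  rw [hX] at hmax
  rcases max_choice (d 0 XL) (d 0 XR) with h | h
  · -- left part has dimension 1; use the reversed order
    rw [h] at hmax
    refine sublemma hd (le' := fun x y : M => y ≤ x) (fun a b => le_total b a) hge XL
      hmax.symm ?_
    intro b Y hY
    refine hcon b (v0 0) Y ?_
    rw [hY, hXL]
    ext v
    simp only [Set.mem_inter_iff, Set.mem_setOf_eq]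
    tauto
  · -- right part has dimension 1
    rw [h] at hmax
    refine sublemma hd (le' := fun x y : M => x ≤ y) le_total hle XR hmax.symm ?_
    intro b Y hY
    refine hcon (v0 0) b Y ?_
    rw [hY, hXR]
    ext v
    simp only [Set.mem_inter_iff, Set.mem_setOf_eq]
    tauto

end S11Core


/-- For an expansion `M` of a linear order, every dimension function is
completely determined by its restriction to the bounded definable subsets of `M`; moreover,
every dimension function takes the value `1` on some bounded definable subset of `M`. -/
theorem statement_11 (L : FirstOrder.Language.{v, w}) (M : Type u) [L.Structure M]
    [LinearOrder M] (hlt : LtDefinable L M) :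
    (∀ d₁ ∈ DimFuns L M, ∀ d₂ ∈ DimFuns L M,
      (∀ X : DefSet L M 1, BddAbove (asSet1 X.1) → BddBelow (asSet1 X.1) →
        d₁ 0 X = d₂ 0 X) →
      d₁ = d₂) ∧
    (∀ d ∈ DimFuns L M, ∃ X : DefSet L M 1,
      BddAbove (asSet1 X.1) ∧ BddBelow (asSet1 X.1) ∧ d 0 X = 1) := by
  have hbdd : ∀ (X : DefSet L M 1) (Y : DefSet L M 1) (a b : M),
      Y.1 = X.1 ∩ ({v : Fin 1 → M | a ≤ v 0} ∩ {v : Fin 1 → M | v 0 ≤ b}) →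
      BddAbove (asSet1 Y.1) ∧ BddBelow (asSet1 Y.1) := by
    intro X Y a b hY
    constructor
    · refine ⟨b, fun m hm => ?_⟩
      have hm' : (fun _ : Fin 1 => m) ∈ Y.1 := hm
      rw [hY] at hm'
      exact hm'.2.2
    · refine ⟨a, fun m hm => ?_⟩
      have hm' : (fun _ : Fin 1 => m) ∈ Y.1 := hm
      rw [hY] at hm'
      exact hm'.2.1
  constructor
  · intro d₁ hd₁ d₂ hd₂ hagree
    have hd₁' : IsDimFun d₁ := hd₁
    have hd₂' : IsDimFun d₂ := hd₂
    -- agreement in arity 1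
    have hbase : ∀ X : DefSet L M 1, d₁ 0 X = d₂ 0 X := by
      intro X
      rcases Set.eq_empty_or_nonempty X.1 with he | hne
      · rw [hd₁'.1.1 X he, hd₂'.1.1 X he]
      · have hone : d₁ 0 X = 1 → d₂ 0 X = 1 := by
          intro h
          obtain ⟨a, b, Y, hY, hdY⟩ := claim hd₁' hlt h
          obtain ⟨hab, hbl⟩ := hbdd X Y a b hY
          have hYY := hagree Y hab hbl
          have h2Y : d₂ 0 Y = 1 := by rw [← hYY]; exact hdY
          have hsub : Y.1 ⊆ X.1 := by rw [hY]; exact Set.inter_subset_left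
          have hle := dim_mono (hd₂'.2.1 0) hsub
          rw [h2Y] at hle
          exact le_antisymm (dim_le_one hd₂'.1 (hd₂'.2.1 0) X) hle
        have hone' : d₂ 0 X = 1 → d₁ 0 X = 1 := by
          intro h
          obtain ⟨a, b, Y, hY, hdY⟩ := claim hd₂' hlt h
          obtain ⟨hab, hbl⟩ := hbdd X Y a b hY
          have hYY := hagree Y hab hbl
          have h1Y : d₁ 0 Y = 1 := by rw [hYY]; exact hdY
          have hsub : Y.1 ⊆ X.1 := by rw [hY]; exact Set.inter_subset_left
          have hle := dim_mono (hd₁'.2.1 0) hsub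
          rw [h1Y] at hle
          exact le_antisymm (dim_le_one hd₁'.1 (hd₁'.2.1 0) X) hle
        rcases wb_zero_or_one (dim_nonneg hd₁'.1 (hd₁'.2.1 0) hne)
          (dim_le_one hd₁'.1 (hd₁'.2.1 0) X) with h | h
        · rcases wb_zero_or_one (dim_nonneg hd₂'.1 (hd₂'.2.1 0) hne)
            (dim_le_one hd₂'.1 (hd₂'.2.1 0) X) with h' | h'
          · rw [h, h']
          · exfalso
            rw [hone' h'] at h
            exact wb_one_ne_zero h
        · rw [h, hone h]
    have key : ∀ n (X : DefSet L M (n + 1)), d₁ n X = d₂ n X := by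
      intro n
      induction n with
      | zero => exact hbase
      | succ n IH =>
        intro X
        obtain ⟨P0, V0, hP0, hV0, hdV0⟩ := hd₁'.2.2.2 n X 0
        obtain ⟨P1, V1, hP1, hV1, hdV1⟩ := hd₁'.2.2.2 n X 1
        obtain ⟨Q0, U0, hQ0, hU0, hdU0⟩ := hd₂'.2.2.2 n X 0
        obtain ⟨Q1, U1, hQ1, hU1, hdU1⟩ := hd₂'.2.2.2 n X 1
        have hPQ0 : P0.1 = Q0.1 := by
          rw [hP0, hQ0]
          ext x
          exact exists_congr fun hf => by rw [hbase]
        have hPQ1 : P1.1 = Q1.1 := by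
          rw [hP1, hQ1]
          ext x
          exact exists_congr fun hf => by rw [hbase]
        have hXsplit : X.1 = V0.1 ∪ V1.1 := by
          rw [hV0, hV1, hP0, hP1]
          ext v
          constructor
          · intro hv
            have hfdef := definable_fiber X.2 (v ∘ Fin.castSucc)
            have hne : (fiber X.1 (v ∘ Fin.castSucc)).Nonempty := by
              refine ⟨fun _ => v (Fin.last (n + 1)), ?_⟩
              show Fin.snoc (v ∘ Fin.castSucc) (v (Fin.last (n + 1))) ∈ X.1
              have hvv : Fin.snoc (v ∘ Fin.castSucc) (v (Fin.last (n + 1))) = v :=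
                Fin.snoc_init_self v
              rw [hvv]
              exact hv
            rcases wb_zero_or_one (dim_nonneg hd₁'.1 (hd₁'.2.1 0) (X := ⟨_, hfdef⟩) hne)
              (dim_le_one hd₁'.1 (hd₁'.2.1 0) (⟨_, hfdef⟩ : DefSet L M 1)) with h | h
            · exact Or.inl ⟨hv, ⟨hfdef, by rw [fin2_cast_zero]; exact h⟩⟩
            · exact Or.inr ⟨hv, ⟨hfdef, by rw [fin2_cast_one]; exact h⟩⟩
          · rintro (hv | hv) <;> exact hv.1
        have hVU0 : V0.1 = U0.1 := by rw [hV0, hU0, hPQ0]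
        have hVU1 : V1.1 = U1.1 := by rw [hV1, hU1, hPQ1]
        have hXsplit2 : X.1 = U0.1 ∪ U1.1 := by rw [← hVU0, ← hVU1]; exact hXsplit
        calc d₁ (n + 1) X = max (d₁ (n + 1) V0) (d₁ (n + 1) V1) :=
              hd₁'.2.1 (n + 1) V0 V1 X hXsplit
          _ = max (d₁ n P0 + (((0 : Fin 2) : ℕ) : WithBot ℕ))
              (d₁ n P1 + (((1 : Fin 2) : ℕ) : WithBot ℕ)) := by rw [hdV0, hdV1]
          _ = max (d₂ n Q0 + (((0 : Fin 2) : ℕ) : WithBot ℕ))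
              (d₂ n Q1 + (((1 : Fin 2) : ℕ) : WithBot ℕ)) := by
                rw [IH P0, IH P1, dim_ext (hd₂'.2.1 n) hPQ0, dim_ext (hd₂'.2.1 n) hPQ1]
          _ = max (d₂ (n + 1) U0) (d₂ (n + 1) U1) := by rw [hdU0, hdU1]
          _ = d₂ (n + 1) X := (hd₂'.2.1 (n + 1) U0 U1 X hXsplit2).symm
    funext n X
    exact key n X
  · intro d hd
    have hd' : IsDimFun d := hd
    have hXuniv : d 0 (⟨Set.univ, Set.definable_univ⟩ : DefSet L M 1) = 1 :=
      hd'.1.2.2 _ rfl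
    obtain ⟨a, b, Y, hY, hdY⟩ := claim hd' hlt hXuniv
    obtain ⟨hab, hbl⟩ := hbdd _ Y a b hY
    exact ⟨Y, hab, hbl, hdY⟩


end PaperDim
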